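/- Let U : [0,∞) → ℝ be continuous and let ε > 0, δ > 0. Let z₁ : [0,ε] → ℂ be continuous with z₁(t) ≠ U(t) for all t ∈ [0,ε], such that z₁ has right derivative 2/(z₁(t) − U(t)) at every t ∈ [0,ε). Let w ∈ ℂ with w ≠ z₁(ε), and let z₂ : [0,δ) → ℂ be continuous with z₂(0) = w, z₂(t) ≠ U(t+ε) for all t ∈ [0,δ), such that z₂ has right derivative 2/(z₂(t) − U(t+ε)) at every t ∈ [0,δ). Define z : [0, ε+δ) → ℂ by z(t) = z₁(t) for t ∈ [0,ε) and z(t) = z₂(t−ε) for t ∈ [ε, ε+δ). Then z has right derivative 2/(z(t) − U(t)) at every t ∈ [0, ε+δ), yet z is discontinuous at t = ε (its left limit there is z₁(ε) ≠ w = z(ε)). In particular, the right-derivative form of the chordal Loewner equation does not have a unique solution. -/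

import Mathlib

open Filter Topology

/-- Non-uniqueness for the right-derivative form of the chordal Loewner equation:
gluing a solution `z₁` on `[0,ε]` with a solution `z₂` (restarted at an arbitrary
point `w ≠ z₁ ε`) produces a function `z` which solves the equation in the
right-derivative sense at every `t ∈ [0, ε+δ)`, yet is discontinuous at `t = ε`:
its left limit there is `z₁ ε ≠ w = z ε`. -/
theorem stmt3 (U : ℝ → ℝ) (hU : ContinuousOn U (Set.Ici 0))
    (ε δ : ℝ) (hε : 0 < ε) (hδ : 0 < δ)
    (z₁ : ℝ → ℂ) (hz₁c : ContinuousOn z₁ (Set.Icc 0 ε))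
    (hz₁U : ∀ t ∈ Set.Icc 0 ε, z₁ t ≠ (U t : ℂ))
    (hz₁d : ∀ t ∈ Set.Ico 0 ε,
      HasDerivWithinAt z₁ (2 / (z₁ t - (U t : ℂ))) (Set.Ici t) t)
    (w : ℂ) (hw : w ≠ z₁ ε)
    (z₂ : ℝ → ℂ) (hz₂c : ContinuousOn z₂ (Set.Ico 0 δ)) (hz₂0 : z₂ 0 = w)
    (hz₂U : ∀ t ∈ Set.Ico 0 δ, z₂ t ≠ (U (t + ε) : ℂ))
    (hz₂d : ∀ t ∈ Set.Ico 0 δ,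
      HasDerivWithinAt z₂ (2 / (z₂ t - (U (t + ε) : ℂ))) (Set.Ici t) t)
    (z : ℝ → ℂ) (hzdef : z = fun t => if t < ε then z₁ t else z₂ (t - ε)) :
    (∀ t ∈ Set.Ico 0 (ε + δ),
      HasDerivWithinAt z (2 / (z t - (U t : ℂ))) (Set.Ici t) t) ∧
    Tendsto z (𝓝[<] ε) (𝓝 (z₁ ε)) ∧
    z ε = w ∧
    ¬ ContinuousWithinAt z (Set.Icc 0 (ε + δ)) ε := by

  subst hzdef
  set z : ℝ → ℂ := fun t => if t < ε then z₁ t else z₂ (t - ε) with hz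
  have hzeps : z ε = w := by
    simp only [hz, lt_irrefl, if_false, sub_self, hz₂0]
  have hzlt : ∀ s, s < ε → z s = z₁ s := fun s hs => if_pos hs
  have hzge : ∀ s, ε ≤ s → z s = z₂ (s - ε) := fun s hs => if_neg (not_lt.2 hs)
  have htend : Tendsto z (𝓝[<] ε) (𝓝 (z₁ ε)) := by
    have h1 : ContinuousWithinAt z₁ (Set.Icc 0 ε) ε :=
      hz₁c ε ⟨le_of_lt hε, le_refl ε⟩
    have h2 : Tendsto z₁ (𝓝[<] ε) (𝓝 (z₁ ε)) := by
      have := h1.tendsto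
      have hle : 𝓝[<] ε ≤ 𝓝[Set.Icc 0 ε] ε := by
        rw [← nhdsWithin_Ico_eq_nhdsLT hε]
        exact nhdsWithin_mono _ Set.Ico_subset_Icc_self
      exact this.mono_left hle
    refine h2.congr' ?_
    filter_upwards [self_mem_nhdsWithin] with s hs
    exact (hzlt s hs).symm
  refine ⟨?_, htend, hzeps, ?_⟩
  · intro t ht
    obtain ⟨ht0, htlt⟩ := ht
    by_cases hcase : t < ε
    · have heq : ∀ᶠ s in 𝓝[Set.Ici t] t, z s = z₁ s := by
        have : Set.Iio ε ∈ 𝓝[Set.Ici t] t :=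
          nhdsWithin_le_nhds (Iio_mem_nhds hcase)
        filter_upwards [this] with s hs
        exact hzlt s hs
      exact ((hz₁d t ⟨ht0, hcase⟩).congr_of_eventuallyEq heq (hzlt t hcase)).congr_deriv
        (by rw [hzlt t hcase])
    · push_neg at hcase
      have hmem : t - ε ∈ Set.Ico 0 δ :=
        ⟨sub_nonneg.2 hcase, by linarith⟩
      have hinner : HasDerivWithinAt (fun s : ℝ => s - ε) 1 (Set.Ici t) t := by
        simpa using (hasDerivWithinAt_id t (Set.Ici t)).sub_const ε
      have hmaps : Set.MapsTo (fun s : ℝ => s - ε) (Set.Ici t) (Set.Ici (t - ε)) :=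
        fun s hs => sub_le_sub_right hs ε
      have hcomp := HasDerivWithinAt.scomp t (hz₂d (t - ε) hmem) hinner hmaps
      have heq : ∀ᶠ s in 𝓝[Set.Ici t] t, z s = z₂ (s - ε) := by
        filter_upwards [self_mem_nhdsWithin] with s hs
        exact hzge s (le_trans hcase hs)
      have h3 : HasDerivWithinAt z (2 / (z₂ (t - ε) - (U (t - ε + ε) : ℂ)))
          (Set.Ici t) t := by
        have := hcomp.congr_of_eventuallyEq heq (hzge t hcase)
        simpa using this
      have h4 : (2 : ℂ) / (z₂ (t - ε) - (U (t - ε + ε) : ℂ)) = 2 / (z t - (U t : ℂ)) := by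
        rw [hzge t hcase, sub_add_cancel]
      rwa [h4] at h3
  · intro hcont
    have h1 : Tendsto z (𝓝[<] ε) (𝓝 w) := by
      rw [← hzeps]
      have := hcont.tendsto
      have hle : 𝓝[<] ε ≤ 𝓝[Set.Icc 0 (ε + δ)] ε := by
        rw [← nhdsWithin_Ico_eq_nhdsLT hε]
        exact nhdsWithin_mono _ (Set.Ico_subset_Icc_self.trans
          (Set.Icc_subset_Icc_right (by linarith)))
      exact this.mono_left hle
    exact hw (tendsto_nhds_unique h1 htend)
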